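/- For every nonnegative integer m, setting a = -1-m (so b = 3a+1 = -2-3m and c = 3a = -3-3m), the terminating hypergeometric sum vanishes: ∑_{n=0}^{3m+2} [(a)_n (3a+1)_n / ((3a)_n · n!)] · (3/2)^n = 0. -/

import Mathlib

open Finset Polynomial

/-- Pochhammer at a negative natural is a signed descending factorial. -/
lemma poch_neg_nat (N n : ℕ) :
    (ascPochhammer ℚ n).eval (-(N : ℚ)) = (-1) ^ n * (N.descFactorial n : ℚ) := by
  rw [ascPochhammer_eval_neg_eq_descPochhammer, descPochhammer_eval_eq_descFactorial]

/-- Extended binomial theorem: the range can overshoot since `choose` vanishes. -/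
lemma binom_sum (N M : ℕ) (h : N ≤ M) (x : ℚ) :
    ∑ n ∈ Finset.range (M + 1), (N.choose n : ℚ) * x ^ n = (1 + x) ^ N := by
  rw [← Finset.sum_subset (Finset.range_subset_range.mpr (by omega) : Finset.range (N + 1) ⊆ Finset.range (M + 1))]
  · rw [add_comm (1 : ℚ) x, add_pow]
    refine Finset.sum_congr rfl fun n _ => by ring
  · intro n _ hn
    rw [Nat.choose_eq_zero_of_lt (by simp at hn ⊢; omega)]
    simp

lemma key_sum (m : ℕ) :
    ∑ n ∈ Finset.range (3 * m + 3),
      ((m + 1).choose n : ℚ) * (-3 / 2) ^ n * ((3 * m + 3 : ℚ) - n) = 0 := by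
  have hsplit : ∀ n : ℕ, ((m + 1).choose n : ℚ) * (-3 / 2) ^ n * ((3 * m + 3 : ℚ) - n)
      = (3 * m + 3 : ℚ) * (((m + 1).choose n : ℚ) * (-3 / 2) ^ n)
        - (((m + 1).choose n : ℚ) * (-3 / 2) ^ n * n) := fun n => by ring
  rw [Finset.sum_congr rfl fun n _ => hsplit n, Finset.sum_sub_distrib,
    ← Finset.mul_sum]
  have h1 : ∑ n ∈ Finset.range (3 * m + 3), ((m + 1).choose n : ℚ) * (-3 / 2) ^ n
      = (1 + (-3 / 2 : ℚ)) ^ (m + 1) := binom_sum (m + 1) (3 * m + 2) (by omega) _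
  have h2 : ∑ n ∈ Finset.range (3 * m + 3),
      ((m + 1).choose n : ℚ) * (-3 / 2) ^ n * n
      = (m + 1 : ℚ) * (-3 / 2) * (1 + (-3 / 2 : ℚ)) ^ m := by
    rw [Finset.sum_range_succ']
    have hterm : ∀ k : ℕ, ((m + 1).choose (k + 1) : ℚ) * (-3 / 2) ^ (k + 1) * (↑(k + 1))
        = (m + 1 : ℚ) * (-3 / 2) * ((m.choose k : ℚ) * (-3 / 2) ^ k) := by
      intro k
      have h := Nat.add_one_mul_choose_eq m k
      have hq : ((m + 1 : ℕ) : ℚ) * (m.choose k : ℚ)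
          = ((m + 1).choose (k + 1) : ℚ) * ((k + 1 : ℕ) : ℚ) := by
        exact_mod_cast congrArg (Nat.cast : ℕ → ℚ) h
      push_cast at hq ⊢
      linear_combination (-1 : ℚ) * (-3 / 2) ^ (k + 1) * hq
    rw [Finset.sum_congr rfl fun k _ => hterm k, ← Finset.mul_sum,
      binom_sum m (3 * m + 1) (by omega)]
    push_cast
    ring
  rw [h1, h2]
  have hp : (1 + (-3 / 2 : ℚ)) ^ (m + 1) = (1 + (-3 / 2 : ℚ)) ^ m * (-1 / 2) := by
    rw [pow_succ]; norm_num
  rw [hp]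
  ring

/-- Formula (1,3,3-3)(i), case `a = -1-m`: the terminating series
`₂F₁(a, 3a+1; 3a; 3/2)` vanishes. -/
theorem case1_vanishing (m : ℕ) :
    ∑ n ∈ Finset.range (3 * m + 2 + 1),
      ((ascPochhammer ℚ n).eval (-1 - (m : ℚ)) *
        (ascPochhammer ℚ n).eval (3 * (-1 - (m : ℚ)) + 1) /
        ((ascPochhammer ℚ n).eval (3 * (-1 - (m : ℚ))) * (n.factorial : ℚ))) * (3 / 2 : ℚ) ^ n
    = 0 := by
  have hC : (3 * (m : ℚ) + 3) ≠ 0 := by positivity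
  have hmain : ∀ n ∈ Finset.range (3 * m + 2 + 1),
      ((ascPochhammer ℚ n).eval (-1 - (m : ℚ)) *
        (ascPochhammer ℚ n).eval (3 * (-1 - (m : ℚ)) + 1) /
        ((ascPochhammer ℚ n).eval (3 * (-1 - (m : ℚ))) * (n.factorial : ℚ))) * (3 / 2 : ℚ) ^ n
      = (((m + 1).choose n : ℚ) * (-3 / 2) ^ n * ((3 * m + 3 : ℚ) - n)) / (3 * (m : ℚ) + 3) := by
    intro n hn
    rw [Finset.mem_range] at hn
    have ha : (-1 - (m : ℚ)) = -((m + 1 : ℕ) : ℚ) := by push_cast; ring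
    have hb : (3 * (-1 - (m : ℚ)) + 1) = -((3 * m + 2 : ℕ) : ℚ) := by push_cast; ring
    have hc : (3 * (-1 - (m : ℚ))) = -((3 * m + 3 : ℕ) : ℚ) := by push_cast; ring
    match n with
    | 0 =>
      simp only [ascPochhammer_zero, eval_one, pow_zero, Nat.choose_zero_right,
        Nat.factorial_zero, Nat.cast_zero, Nat.cast_one]
      field_simp
      ring
    | Nat.succ k =>
      have hk : k ≤ 3 * m + 2 := by omega
      have hA : (ascPochhammer ℚ (k + 1)).eval (-1 - (m : ℚ))
          = (-1) ^ (k + 1) * (((k + 1).factorial : ℚ) * ((m + 1).choose (k + 1) : ℚ)) := by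
        rw [ha, poch_neg_nat, Nat.descFactorial_eq_factorial_mul_choose]
        push_cast; ring
      set P : ℚ := (ascPochhammer ℚ k).eval (-((3 * m + 2 : ℕ) : ℚ)) with hP
      have hPne : P ≠ 0 := by
        rw [hP, poch_neg_nat]
        have hd : (3 * m + 2).descFactorial k ≠ 0 := by
          rw [Ne, Nat.descFactorial_eq_zero_iff_lt]; omega
        have h1 : ((-1 : ℚ)) ^ k ≠ 0 := by positivity
        have h2 : (((3 * m + 2).descFactorial k : ℕ) : ℚ) ≠ 0 := Nat.cast_ne_zero.mpr hd
        exact mul_ne_zero h1 h2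
      have hB : (ascPochhammer ℚ (k + 1)).eval (3 * (-1 - (m : ℚ)) + 1)
          = P * (-((3 * m + 2 : ℕ) : ℚ) + k) := by
        rw [hb, ascPochhammer_succ_eval]
      have hshift : (-((3 * m + 3 : ℕ) : ℚ)) + 1 = -((3 * m + 2 : ℕ) : ℚ) := by
        push_cast; ring
      have hCval : (ascPochhammer ℚ (k + 1)).eval (3 * (-1 - (m : ℚ)))
          = (-((3 * m + 3 : ℕ) : ℚ)) * P := by
        rw [hc, ascPochhammer_succ_left, eval_mul, eval_X, eval_comp, eval_add, eval_X,
          eval_one, hshift]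
      rw [hA, hB, hCval]
      have hfac : (((k + 1).factorial : ℕ) : ℚ) ≠ 0 :=
        Nat.cast_ne_zero.mpr (Nat.factorial_ne_zero _)
      have hneg : ((-3 / 2 : ℚ)) ^ (k + 1) = (-1) ^ (k + 1) * (3 / 2) ^ (k + 1) := by
        rw [neg_div, neg_pow]
      have hCne : (-((3 * m + 3 : ℕ) : ℚ)) * P ≠ 0 := by
        apply mul_ne_zero _ hPne
        simp only [ne_eq, neg_eq_zero, Nat.cast_eq_zero]
        omega
      rw [div_mul_eq_mul_div, div_eq_div_iff (mul_ne_zero hCne hfac) hC, hneg]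
      push_cast
      simp only [Nat.succ_eq_add_one, pow_succ]
      ring
  rw [Finset.sum_congr rfl hmain, ← Finset.sum_div]
  have : (3 * m + 2 + 1) = 3 * m + 3 := by omega
  rw [this, key_sum m, zero_div]
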